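/- If in addition (((m : ℤ) - 2 * r).natAbs) is coprime to n and m * n ≥ 2, then τ is a single cycle through all of ZMod m × ZMod n; that is, τ.IsCycle and τ.support = Finset.univ. (This is the last part of Theorem 1.1: when gcd(m - 2r, n) = 1, C_m^+ ⊗_h {C_n^+, C_n^-} ≅ C_{mn}^+.) -/

import Mathlib

lemma sum_range_zmod {m : ℕ} [NeZero m] (f : ZMod m → ℤ) :
    ∑ j ∈ Finset.range m, f (j : ZMod m) = ∑ i : ZMod m, f i := by
  refine Finset.sum_nbij' (i := fun j => (j : ZMod m)) (j := fun i => i.val) ?_ ?_ ?_ ?_ ?_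
  all_goals intro a ha
  · exact Finset.mem_univ _
  · exact Finset.mem_range.2 (ZMod.val_lt a)
  · exact ZMod.val_natCast_of_lt (Finset.mem_range.1 ha)
  · exact ZMod.natCast_zmod_val a
  · rfl

/-- last part of Theorem 1.1. With `τ` as before, if `m - 2r` is coprime
to `n` and `m * n ≥ 2`, then `τ` is a single cycle through all of `ZMod m × ZMod n`, i.e.
`C_m^+ ⊗_h {C_n^+, C_n^-} ≅ C_{mn}^+`. -/
theorem tau_isCycle_of_coprime {m n : ℕ} [NeZero m] [NeZero n]
    (ε : ZMod m → ℤ) (hε : ∀ i, ε i = 1 ∨ ε i = -1)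
    (r : ℕ) (hr : r = (Finset.univ.filter fun i : ZMod m => ε i = -1).card)
    (τ : Equiv.Perm (ZMod m × ZMod n))
    (hτ : ∀ (i : ZMod m) (x : ZMod n), τ (i, x) = (i + 1, x + (ε i : ZMod n)))
    (hcop : (((m : ℤ) - 2 * (r : ℤ)).natAbs).Coprime n)
    (hmn : 2 ≤ m * n) :
    τ.IsCycle ∧ τ.support = Finset.univ := by
  -- iterate formula
  have hpow : ∀ (k : ℕ) (i : ZMod m) (x : ZMod n),
      (τ ^ k) (i, x) = (i + k, x + ((∑ j ∈ Finset.range k, ε (i + j) : ℤ) : ZMod n)) := by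
    intro k
    induction k with
    | zero => intro i x; simp
    | succ k ih =>
      intro i x
      have hsum : (∑ j ∈ Finset.range (k + 1), ε (i + (j : ℕ)) : ℤ)
          = ε i + ∑ j ∈ Finset.range k, ε (i + 1 + (j : ℕ)) := by
        rw [Finset.sum_range_succ', add_comm]
        congr 1
        · simp
        · apply Finset.sum_congr rfl
          intro j _
          congr 1
          push_cast
          ring
      rw [pow_succ, Equiv.Perm.mul_apply, hτ, ih, hsum]
      push_cast
      rw [Prod.mk.injEq]
      constructor <;> ring
  have hrm : r ≤ m := by
    rw [hr]
    calc (Finset.univ.filter fun i : ZMod m => ε i = -1).card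
        ≤ Finset.univ.card := Finset.card_filter_le _ _
      _ = m := by simp [ZMod.card]
  -- total sum
  have hS : ∀ i : ZMod m, (∑ j ∈ Finset.range m, ε (i + j) : ℤ) = (m : ℤ) - 2 * r := by
    intro i
    have h1 : (∑ j ∈ Finset.range m, ε (i + j) : ℤ) = ∑ t : ZMod m, ε t := by
      rw [sum_range_zmod (fun t => ε (i + t))]
      exact Fintype.sum_equiv (Equiv.addLeft i) _ _ (fun t => rfl)
    rw [h1, ← Finset.sum_filter_add_sum_filter_not Finset.univ
      (fun i : ZMod m => ε i = -1) ε]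
    have h2 : ∑ t ∈ Finset.univ.filter (fun i : ZMod m => ε i = -1), ε t = -(r : ℤ) := by
      rw [Finset.sum_congr rfl (fun t ht => (Finset.mem_filter.1 ht).2), Finset.sum_const,
        ← hr]
      simp
    have hcard : (Finset.univ.filter (fun i : ZMod m => ¬ ε i = -1)).card = m - r := by
      rw [Finset.filter_not, Finset.card_sdiff_of_subset (Finset.filter_subset _ _), ← hr]
      simp [ZMod.card]
    have h3 : ∑ t ∈ Finset.univ.filter (fun i : ZMod m => ¬ ε i = -1), ε t
        = ((m : ℤ) - r) := by
      rw [Finset.sum_congr rfl (fun t ht => ((hε t).resolve_right (Finset.mem_filter.1 ht).2)),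
        Finset.sum_const, hcard]
      simp [Nat.cast_sub hrm]
    rw [h2, h3]; ring
  -- τ^m shifts the second coordinate by m - 2r
  set u : ZMod n := (((m : ℤ) - 2 * r : ℤ) : ZMod n) with hu
  have hpm : ∀ (i : ZMod m) (x : ZMod n), (τ ^ m) (i, x) = (i, x + u) := by
    intro i x
    rw [hpow, hS]
    simp [hu, ZMod.natCast_self]
  -- u is a unit
  have hunit : IsUnit u := by
    have h1 : IsUnit ((((m : ℤ) - 2 * r).natAbs : ZMod n)) :=
      (ZMod.isUnit_iff_coprime _ n).2 hcop
    rcases Int.natAbs_eq ((m : ℤ) - 2 * r) with h | h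
    · rw [hu, h, Int.cast_natCast]; exact h1
    · rw [hu, h, Int.cast_neg, Int.cast_natCast]; exact h1.neg
  -- reach any point from (0,0)
  have hiter : ∀ a : ℕ, ((τ ^ m) ^ a) ((0 : ZMod m), (0 : ZMod n)) = (0, a • u) := by
    intro a
    induction a with
    | zero => simp
    | succ a ih2 => rw [pow_succ', Equiv.Perm.mul_apply, ih2, hpm, succ_nsmul]
  have hreach : ∀ p : ZMod m × ZMod n, ∃ k : ℕ, (τ ^ k) ((0 : ZMod m), (0 : ZMod n)) = p := by
    rintro ⟨i, x⟩
    obtain ⟨v, hv⟩ := hunit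
    set s : ℤ := ∑ j ∈ Finset.range i.val, ε ((0 : ZMod m) + j) with hs
    obtain ⟨a, ha⟩ := ZMod.natCast_zmod_surjective (((v⁻¹ : (ZMod n)ˣ) : ZMod n) * (x - (s : ZMod n)))
    refine ⟨i.val + a * m, ?_⟩
    have key : (τ ^ (i.val + a * m)) ((0 : ZMod m), (0 : ZMod n))
        = (τ ^ i.val) (((τ ^ m) ^ a) ((0 : ZMod m), (0 : ZMod n))) := by
      rw [← pow_mul, ← Equiv.Perm.mul_apply, ← pow_add, mul_comm a m]
    rw [key, hiter, hpow]
    have hx : a • u + ((s : ℤ) : ZMod n) = x := by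
      rw [nsmul_eq_mul, ha, ← hv]
      rw [mul_right_comm, Units.inv_mul, one_mul, sub_add_cancel]
    rw [Prod.mk.injEq]
    constructor
    · simp [ZMod.natCast_zmod_val]
    · rw [← hs, hx]
  -- every point moves
  have hmove : ∀ p : ZMod m × ZMod n, τ p ≠ p := by
    rintro ⟨i, x⟩ h
    rw [hτ] at h
    have h1 : i + 1 = i := congrArg Prod.fst h
    have h2 : x + ((ε i : ℤ) : ZMod n) = x := congrArg Prod.snd h
    have hm1 : m = 1 := by
      have h10 : ((1 : ℕ) : ZMod m) = 0 := by
        push_cast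
        nth_rewrite 2 [← add_zero i] at h1
        exact add_left_cancel h1
      exact Nat.dvd_one.1 ((ZMod.natCast_eq_zero_iff 1 m).1 h10)
    have hn1 : n = 1 := by
      have hz : ((ε i : ℤ) : ZMod n) = 0 := by
        nth_rewrite 2 [← add_zero x] at h2
        exact add_left_cancel h2
      have h10 : ((1 : ℕ) : ZMod n) = 0 := by
        rcases hε i with he | he
        · rw [he] at hz; exact_mod_cast hz
        · rw [he] at hz; push_cast at hz ⊢; linear_combination -hz
      exact Nat.dvd_one.1 ((ZMod.natCast_eq_zero_iff 1 n).1 h10)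
    rw [hm1, hn1] at hmn
    omega
  refine ⟨?_, ?_⟩
  · refine ⟨((0 : ZMod m), (0 : ZMod n)), hmove _, fun y _ => ?_⟩
    obtain ⟨k, hk⟩ := hreach y
    exact ⟨(k : ℤ), by rw [zpow_natCast, hk]⟩
  · ext p
    simp [Equiv.Perm.mem_support, hmove p]
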